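/- F_n(ε) = ∅ (where ε is the empty word, which lies in L_n), and for each j ∈ {1,…,n−1}, F_n^min(σ_j) = {σ_1, σ_2, …, σ_{j−2}} ∪ {σ_{j−1}σ_j} as a subset of B_n^+, with the convention that terms involving indices less than 1 are omitted (so F_n^min(σ_1) = ∅ and F_n^min(σ_2) = {σ_1σ_2}). -/

import Mathlib

/-!
Common setup: the positive braid monoid `B_n^+` on `n` strands, presented by the
Artin generators `σ_1, …, σ_{n-1}` (1-based indexing) with the braid relations;
lex-representatives, forbidden prefixes, admissible functions, etc.
-/

namespace BraidPaper

/-- Words in the Artin generators: the free monoid on `n - 1` letters. -/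
abbrev Word (n : ℕ) := FreeMonoid (Fin (n - 1))

/-- The generator `σ_i` (`1 ≤ i ≤ n - 1`, 1-based) as a one-letter word;
the empty word for out-of-range indices. -/
def sigma (n : ℕ) (i : ℕ) : Word n :=
  if h : 1 ≤ i ∧ i ≤ n - 1 then FreeMonoid.of (⟨i - 1, by omega⟩ : Fin (n - 1)) else 1

/-- The braid relations. -/
inductive BraidRel (n : ℕ) : Word n → Word n → Prop
  | comm : ∀ i j : ℕ, 1 ≤ i → i ≤ n - 1 → 1 ≤ j → j ≤ n - 1 → (i + 2 ≤ j ∨ j + 2 ≤ i) →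
      BraidRel n (sigma n i * sigma n j) (sigma n j * sigma n i)
  | braid : ∀ i : ℕ, 1 ≤ i → i + 1 ≤ n - 1 →
      BraidRel n (sigma n i * sigma n (i + 1) * sigma n i)
        (sigma n (i + 1) * sigma n i * sigma n (i + 1))

/-- The congruence generated by the braid relations. -/
def braidCon (n : ℕ) : Con (Word n) := conGen (BraidRel n)

/-- The positive braid monoid `B_n^+`. -/
abbrev PB (n : ℕ) := (braidCon n).Quotient

/-- The canonical projection `b : A_n^* → B_n^+`. -/
def pr (n : ℕ) : Word n →* PB n := (braidCon n).mk'

/-- The length homomorphism on words (with values in `Multiplicative ℕ`). -/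
def lenHom (n : ℕ) : Word n →* Multiplicative ℕ :=
  FreeMonoid.lift fun _ => Multiplicative.ofAdd 1

lemma lenHom_sigma (n t : ℕ) (h1 : 1 ≤ t) (h2 : t ≤ n - 1) :
    lenHom n (sigma n t) = Multiplicative.ofAdd 1 := by
  rw [sigma, dif_pos ⟨h1, h2⟩]
  exact FreeMonoid.lift_eval_of _ _

lemma braidCon_le_ker (n : ℕ) : braidCon n ≤ Con.ker (lenHom n) := by
  refine Con.conGen_le.2 ?_
  intro x y h
  rw [Con.ker_rel]
  cases h with
  | comm i j hi hi' hj hj' hij =>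
      rw [map_mul, map_mul, mul_comm]
  | braid i hi hi' =>
      rw [map_mul, map_mul, map_mul, map_mul,
        lenHom_sigma n i hi (by omega), lenHom_sigma n (i + 1) (by omega) hi']

/-- The (well-defined) length of a positive braid. -/
def len (n : ℕ) (x : PB n) : ℕ :=
  Multiplicative.toAdd (Con.lift _ (lenHom n) (braidCon_le_ker n) x)

/-- The length of a word. -/
def wlen {n : ℕ} (w : Word n) : ℕ := (FreeMonoid.toList w).length

/-- Strict lexicographic order on words, induced by `σ_1 < σ_2 < ⋯ < σ_{n-1}`. -/
def lexLt {n : ℕ} (u v : Word n) : Prop :=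
  List.Lex (· < ·) (FreeMonoid.toList u) (FreeMonoid.toList v)

/-- `L_n`: the set of lex-representatives, i.e. words that are `≤_lex`-minimal among
all words representing the same element of `B_n^+` (all of which have equal length). -/
def Ln (n : ℕ) : Set (Word n) :=
  {w | ∀ v : Word n, pr n v = pr n w → ¬ lexLt v w}

open Classical in
/-- `ω(β)`: the lex-representative of a positive braid `β`. -/
noncomputable def omegaRep (n : ℕ) (β : PB n) : Word n :=
  if h : ∃ w : Word n, pr n w = β ∧ w ∈ Ln n then h.choose else 1

/-- `F_n(w)`: the set of forbidden prefixes after `w`. -/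
def Fset (n : ℕ) (w : Word n) : Set (PB n) :=
  {α | w * omegaRep n α ∉ Ln n}

/-- Left-divisibility `a ≼ b` in `B_n^+`. -/
def ldvd (n : ℕ) (a b : PB n) : Prop := ∃ c : PB n, a * c = b

/-- The set of `≼`-minimal elements of a subset of `B_n^+`. -/
def minimals (n : ℕ) (S : Set (PB n)) : Set (PB n) :=
  {a | a ∈ S ∧ ∀ b ∈ S, ldvd n b a → b = a}

/-- `F_n^min(w)`: the set of minimal forbidden prefixes after `w`. -/
def Fmin (n : ℕ) (w : Word n) : Set (PB n) := minimals n (Fset n w)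

/-- `d` is a least common right-multiple of the set `S`. -/
def IsLcm (n : ℕ) (S : Set (PB n)) (d : PB n) : Prop :=
  (∀ a ∈ S, ldvd n a d) ∧ ∀ e : PB n, (∀ a ∈ S, ldvd n a e) → ldvd n d e

/-- The descending product `σ_a σ_{a-1} ⋯ σ_b` (empty if `b > a`). -/
def prodDesc (n a b : ℕ) : Word n :=
  (((List.range' b (a + 1 - b)).reverse).map (sigma n)).prod

/-- The ascending product `σ_a σ_{a+1} ⋯ σ_b` (empty if `a > b`). -/
def prodAsc (n a b : ℕ) : Word n :=
  ((List.range' a (b + 1 - a)).map (sigma n)).prod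

/-- Admissible functions `f : {1,…,n-1} → {-1,0,1,…,n-1}`. -/
def Admissible (n : ℕ) (f : ℕ → ℤ) : Prop :=
  (∀ i : ℕ, 1 ≤ i → i ≤ n - 1 → -1 ≤ f i ∧ f i ≤ (i : ℤ)) ∧ f 1 ≠ -1

/-- The set `F_f ⊆ B_n^+` associated to an admissible function `f`: the elements
`σ_i σ_{i-1} ⋯ σ_{f(i)}` for `i` with `1 ≤ f(i) ≤ i`, together with the elements
`σ_{i-1} σ_i` for `i` with `f(i) = -1`. -/
def Ff (n : ℕ) (f : ℕ → ℤ) : Set (PB n) :=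
  {x | ∃ i : ℕ, 1 ≤ i ∧ i ≤ n - 1 ∧ 1 ≤ f i ∧ f i ≤ (i : ℤ) ∧
        x = pr n (prodDesc n i (f i).toNat)} ∪
  {x | ∃ i : ℕ, 1 ≤ i ∧ i ≤ n - 1 ∧ f i = -1 ∧ x = pr n (sigma n (i - 1) * sigma n i)}

/-- `F_n^min(w, m)`: the set of `≼`-minimal elements of `{σ_1,…,σ_m} ∪ F_n^min(w)`. -/
def FminM (n : ℕ) (w : Word n) (m : ℕ) : Set (PB n) :=
  minimals n ({x | ∃ i : ℕ, 1 ≤ i ∧ i ≤ m ∧ x = pr n (sigma n i)} ∪ Fmin n w)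

/-- `x_{n,j}` (for `j : ℤ`): the number of elements of `B_n^+` of length `j`
(`0` for negative `j`). -/
noncomputable def xcount (n : ℕ) (j : ℤ) : ℕ :=
  Nat.card {x : PB n // (len n x : ℤ) = j}

/-- `x_{n,k}(w,m)`: the number of words in `L_n` of length `k` of the form `w·w'`,
where `w'` does not begin with any of `σ_1, …, σ_m`. -/
noncomputable def xwm (n k : ℕ) (w : Word n) (m : ℕ) : ℕ :=
  Nat.card {v : Word n // wlen v = k ∧ v ∈ Ln n ∧
    ∃ w' : Word n, v = w * w' ∧
      ∀ i : ℕ, 1 ≤ i → i ≤ m → ¬ ∃ u : Word n, w' = sigma n i * u}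


/-! ### Auxiliary development -/


variable {m : ℕ}

/-- `a` and `b` are "far" generators (they commute). -/
def Far (a b : Fin m) : Prop := a.val + 2 ≤ b.val ∨ b.val + 2 ≤ a.val

/-- `a` and `b` are adjacent generators. -/
def Adj (a b : Fin m) : Prop := a.val + 1 = b.val ∨ b.val + 1 = a.val

instance (a b : Fin m) : Decidable (Adj a b) := by unfold Adj; exact inferInstance

lemma Far.symm {a b : Fin m} (h : Far a b) : Far b a := Or.symm h
lemma Adj.symm {a b : Fin m} (h : Adj a b) : Adj b a := Or.symm h
lemma Far.not_adj {a b : Fin m} (h : Far a b) : ¬ Adj a b := by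
  rcases h with h | h <;> rintro (h' | h') <;> omega
lemma Far.ne {a b : Fin m} (h : Far a b) : a ≠ b := by
  rcases h with h | h <;> (intro h'; subst h'; omega)
lemma Adj.ne {a b : Fin m} (h : Adj a b) : a ≠ b := by
  rcases h with h | h <;> (intro h'; subst h'; omega)
lemma rel_trichot (a b : Fin m) : a = b ∨ Adj a b ∨ Far a b := by
  rcases Nat.lt_trichotomy a.val b.val with h | h | h
  · rcases Nat.lt_or_ge (a.val + 1) b.val with h' | h'
    · exact Or.inr (Or.inr (Or.inl (by omega)))
    · exact Or.inr (Or.inl (Or.inl (by omega)))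
  · exact Or.inl (Fin.ext h)
  · rcases Nat.lt_or_ge (b.val + 1) a.val with h' | h'
    · exact Or.inr (Or.inr (Or.inr (by omega)))
    · exact Or.inr (Or.inl (Or.inr (by omega)))

/-- Single braid relation on lists. -/
inductive Brel : List (Fin m) → List (Fin m) → Prop
  | comm (a b : Fin m) : a.val + 2 ≤ b.val → Brel [a, b] [b, a]
  | braid (a b : Fin m) : a.val + 1 = b.val → Brel [a, b, a] [b, a, b]

/-- One rewriting step. -/
def Bstep (u v : List (Fin m)) : Prop :=
  ∃ p l r q, (Brel l r ∨ Brel r l) ∧ u = p ++ (l ++ q) ∧ v = p ++ (r ++ q)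

/-- Equivalence by rewriting. -/
def Req (u v : List (Fin m)) : Prop := Relation.ReflTransGen Bstep u v

lemma Bstep.symm {u v : List (Fin m)} (h : Bstep u v) : Bstep v u := by
  obtain ⟨p, l, r, q, hlr, hu, hv⟩ := h
  exact ⟨p, r, l, q, hlr.symm, hv, hu⟩

@[refl] lemma Req.refl (u : List (Fin m)) : Req u u := Relation.ReflTransGen.refl

lemma Req.trans {u v w : List (Fin m)} (h : Req u v) (h' : Req v w) : Req u w :=
  Relation.ReflTransGen.trans h h'

lemma Req.symm {u v : List (Fin m)} (h : Req u v) : Req v u :=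
  (@Relation.ReflTransGen.stdSymm _ _ ⟨fun _ _ hs => Bstep.symm hs⟩).symm _ _ h

lemma Bstep.req {u v : List (Fin m)} (h : Bstep u v) : Req u v :=
  Relation.ReflTransGen.single h

lemma Req.append_left (p : List (Fin m)) {u v : List (Fin m)} (h : Req u v) :
    Req (p ++ u) (p ++ v) := by
  refine Relation.ReflTransGen.lift (p := Bstep) (fun x => p ++ x) ?_ _ _ h
  rintro a b ⟨p', l, r, q, hlr, ha, hb⟩
  exact ⟨p ++ p', l, r, q, hlr, by simp [ha], by simp [hb]⟩

lemma Req.append_right (q : List (Fin m)) {u v : List (Fin m)} (h : Req u v) :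
    Req (u ++ q) (v ++ q) := by
  refine Relation.ReflTransGen.lift (p := Bstep) (fun x => x ++ q) ?_ _ _ h
  rintro a b ⟨p', l, r, q', hlr, ha, hb⟩
  exact ⟨p', l, r, q' ++ q, hlr, by simp [ha], by simp [hb]⟩

lemma Req.cons (a : Fin m) {u v : List (Fin m)} (h : Req u v) : Req (a :: u) (a :: v) :=
  h.append_left [a]

/-- The far-commutation step, at the head. -/
lemma swap2 {a b : Fin m} (h : Far a b) (t : List (Fin m)) :
    Req (a :: b :: t) (b :: a :: t) := by
  rcases h with h | h
  · exact Bstep.req ⟨[], [a, b], [b, a], t, Or.inl (Brel.comm a b h), rfl, rfl⟩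
  · exact Bstep.req ⟨[], [a, b], [b, a], t, Or.inr (Brel.comm b a h), rfl, rfl⟩

/-- The braid step, at the head. -/
lemma braid3 {a b : Fin m} (h : Adj a b) (t : List (Fin m)) :
    Req (a :: b :: a :: t) (b :: a :: b :: t) := by
  rcases h with h | h
  · exact Bstep.req ⟨[], [a, b, a], [b, a, b], t, Or.inl (Brel.braid a b h), rfl, rfl⟩
  · exact Bstep.req ⟨[], [a, b, a], [b, a, b], t, Or.inr (Brel.braid b a h), rfl, rfl⟩

lemma Brel.length {l r : List (Fin m)} (h : Brel l r) : l.length = r.length := by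
  cases h <;> rfl

lemma Bstep.length {u v : List (Fin m)} (h : Bstep u v) : u.length = v.length := by
  obtain ⟨p, l, r, q, hlr, hu, hv⟩ := h
  have : l.length = r.length := by rcases hlr with h | h; exacts [h.length, h.length.symm]
  simp [hu, hv, this]

lemma Req.length {u v : List (Fin m)} (h : Req u v) : u.length = v.length := by
  induction h with
  | refl => rfl
  | tail _ h ih => exact ih.trans h.length

lemma Brel.two_le_length {l r : List (Fin m)} (h : Brel l r) : 2 ≤ l.length := by
  cases h <;> simp

/-- No rewriting step applies to a word of length `≤ 1`. -/
lemma no_step_short {u v : List (Fin m)} (h : Bstep u v) : 2 ≤ u.length := by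
  obtain ⟨p, l, r, q, hlr, hu, hv⟩ := h
  have : 2 ≤ l.length := by
    rcases hlr with h | h
    · exact h.two_le_length
    · rw [← h.length]; exact h.two_le_length
  simp [hu]; omega

lemma Req_nil {v : List (Fin m)} (h : Req ([] : List (Fin m)) v) : v = [] := by
  rcases Relation.ReflTransGen.cases_head h with h | ⟨w, hs, _⟩
  · exact h.symm
  · exact absurd (no_step_short hs) (by simp)

lemma Req_single {a : Fin m} {v : List (Fin m)} (h : Req [a] v) : v = [a] := by
  rcases Relation.ReflTransGen.cases_head h with h | ⟨w, hs, _⟩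
  · exact h.symm
  · exact absurd (no_step_short hs) (by simp)

/-- No rewriting step applies to an adjacent pair. -/
lemma no_step_adj {a b : Fin m} (hab : Adj a b) {v : List (Fin m)} (h : Bstep [a, b] v) :
    False := by
  obtain ⟨p, l, r, q, hlr, hu, hv⟩ := h
  have hlen : 2 ≤ l.length := by
    rcases hlr with h | h
    · exact h.two_le_length
    · rw [← h.length]; exact h.two_le_length
  have hl2 : p.length + (l.length + q.length) = 2 := by
    have := congrArg List.length hu; simpa using this.symm
  have hp : p = [] := by rw [List.length_eq_zero_iff.symm]; omega
  have hq : q = [] := by rw [List.length_eq_zero_iff.symm]; omega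
  subst hp; subst hq
  simp at hu
  subst hu
  rcases hlr with h | h
  · cases h with
    | comm x y hxy => rcases hab with h' | h' <;> omega
  · cases h with
    | comm x y hxy => rcases hab with h' | h' <;> omega

lemma Req_pair_adj {a b : Fin m} (hab : Adj a b) {v : List (Fin m)} (h : Req [a, b] v) :
    v = [a, b] := by
  rcases Relation.ReflTransGen.cases_head h with h | ⟨w, hs, _⟩
  · exact h.symm
  · exact absurd hs (fun hs => no_step_adj hab hs)


instance : Trans (Req (m := m)) (Req (m := m)) (Req (m := m)) := ⟨Req.trans⟩

lemma commList {s : Fin m} : ∀ {L : List (Fin m)}, (∀ x ∈ L, Far s x) → ∀ t : List (Fin m),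
    Req (s :: (L ++ t)) (L ++ (s :: t)) := by
  intro L
  induction L with
  | nil => intro _ t; exact Req.refl _
  | cons x L ih =>
      intro h t
      have h1 : Req (s :: (x :: L) ++ t) (x :: s :: (L ++ t)) :=
        swap2 (h x (by simp)) (L ++ t)
      have h2 : Req (x :: (s :: (L ++ t))) (x :: (L ++ (s :: t))) :=
        (ih (fun y hy => h y (by simp [hy])) t).cons x
      simpa using h1.trans h2

/-- The complement `C(i,j)`: `i * (C i j)` is the right lcm of `i` and `j`. -/
def Cmp (i j : Fin m) : List (Fin m) :=
  if i = j then [] else if Adj i j then [j, i] else [j]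

lemma Cmp_self (i : Fin m) : Cmp i i = [] := by simp [Cmp]

lemma Cmp_adj {i j : Fin m} (h : Adj i j) : Cmp i j = [j, i] := by
  simp [Cmp, h.ne, h]

lemma Cmp_far {i j : Fin m} (h : Far i j) : Cmp i j = [j] := by
  simp [Cmp, h.ne, h.not_adj]

lemma mem_Cmp {i j x : Fin m} (h : x ∈ Cmp i j) : x = i ∨ x = j := by
  unfold Cmp at h
  split at h
  · simp at h
  · split at h <;> simp at h <;> tauto

section KeyCases

variable {ℓ : ℕ}

/-- Outer induction hypothesis type. -/
def IHout (m ℓ : ℕ) : Prop :=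
  ∀ u v : List (Fin m), u.length ≤ ℓ → Req u v →
    ∀ (i : Fin m) (a : List (Fin m)) (j : Fin m) (b : List (Fin m)),
      u = i :: a → v = j :: b →
      ∃ c, Req a (Cmp i j ++ c) ∧ Req b (Cmp j i ++ c)

lemma key_comm_case (IH : IHout m ℓ) (i s : Fin m) (his : Far i s) (q : List (Fin m))
    (j : Fin m) (b : List (Fin m)) (hlen : q.length + 2 ≤ ℓ + 1)
    (hc : ∃ c, Req (i :: q) (Cmp s j ++ c) ∧ Req b (Cmp j s ++ c)) :
    ∃ c, Req (s :: q) (Cmp i j ++ c) ∧ Req b (Cmp j i ++ c) := by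
  obtain ⟨c, hstar, hb⟩ := hc
  rcases rel_trichot s j with hsj | hsj | hsj
  · -- s = j
    subst hsj
    rw [Cmp_self, List.nil_append] at hstar hb
    refine ⟨q, ?_, ?_⟩
    · rw [Cmp_far his]; exact Req.refl _
    · rw [Cmp_far his.symm]
      exact hb.trans hstar.symm
  · -- Adj s j
    rw [Cmp_adj hsj] at hstar
    rw [Cmp_adj hsj.symm] at hb
    simp only [List.cons_append, List.nil_append] at hstar hb
    have hL1 : (i :: q).length ≤ ℓ := by simp; omega
    rcases rel_trichot i j with hij | hij | hij
    · subst hij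
      exact absurd hsj.symm his.not_adj
    · -- Adj i j : the cube case
      obtain ⟨d, hq, hsc⟩ := IH (i :: q) (j :: s :: c) hL1 hstar i q j (s :: c) rfl rfl
      rw [Cmp_adj hij] at hq
      rw [Cmp_adj hij.symm] at hsc
      have e1 := hstar.length
      simp at e1
      have hL2 : (s :: c).length ≤ ℓ := by simp; omega
      obtain ⟨e, hcc, hjd⟩ := IH (s :: c) (i :: j :: d) hL2 hsc s c i (j :: d) rfl rfl
      rw [Cmp_far his.symm] at hcc
      rw [Cmp_far his] at hjd
      have e2 := hsc.length
      simp at e2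
      have hL3 : (j :: d).length ≤ ℓ := by simp; omega
      obtain ⟨g, hd, he⟩ := IH (j :: d) (s :: e) hL3 hjd j d s e rfl rfl
      rw [Cmp_adj hsj.symm] at hd
      rw [Cmp_adj hsj] at he
      simp only [List.cons_append, List.nil_append] at hq hsc hcc hjd hd he
      refine ⟨s :: j :: i :: g, ?_, ?_⟩
      · rw [Cmp_adj hij]
        have t1 : Req (s :: q) (s :: j :: i :: d) := hq.cons s
        have t2 : Req (s :: j :: i :: d) (s :: j :: i :: s :: j :: g) :=
          ((hd.cons i).cons j).cons s
        have t3 : Req (s :: j :: i :: s :: j :: g) (s :: j :: s :: i :: j :: g) :=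
          ((swap2 his (j :: g)).cons j).cons s
        have t4 : Req (s :: j :: s :: i :: j :: g) (j :: s :: j :: i :: j :: g) :=
          braid3 hsj (i :: j :: g)
        have t5 : Req (j :: s :: j :: i :: j :: g) (j :: s :: i :: j :: i :: g) :=
          ((braid3 hij.symm g).cons s).cons j
        have t6 : Req (j :: s :: i :: j :: i :: g) (j :: i :: s :: j :: i :: g) :=
          (swap2 his.symm (j :: i :: g)).cons j
        simpa using t1.trans (t2.trans (t3.trans (t4.trans (t5.trans t6))))
      · rw [Cmp_adj hij.symm]
        have b2 : Req (s :: j :: c) (s :: j :: i :: e) := (hcc.cons j).cons s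
        have b3 : Req (s :: j :: i :: e) (s :: j :: i :: j :: s :: g) :=
          ((he.cons i).cons j).cons s
        have b4 : Req (s :: j :: i :: j :: s :: g) (s :: i :: j :: i :: s :: g) :=
          (braid3 hij.symm (s :: g)).cons s
        have b5 : Req (s :: i :: j :: i :: s :: g) (i :: s :: j :: i :: s :: g) :=
          swap2 his.symm (j :: i :: s :: g)
        have b6 : Req (i :: s :: j :: i :: s :: g) (i :: s :: j :: s :: i :: g) :=
          (((swap2 his g).cons j).cons s).cons i
        have b7 : Req (i :: s :: j :: s :: i :: g) (i :: j :: s :: j :: i :: g) :=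
          (braid3 hsj (i :: g)).cons i
        simpa using hb.trans (b2.trans (b3.trans (b4.trans (b5.trans (b6.trans b7)))))
    · -- Far i j
      obtain ⟨d, hq, hsc⟩ := IH (i :: q) (j :: s :: c) hL1 hstar i q j (s :: c) rfl rfl
      rw [Cmp_far hij] at hq
      rw [Cmp_far hij.symm] at hsc
      have e1 := hstar.length
      simp at e1
      have hL2 : (s :: c).length ≤ ℓ := by simp; omega
      obtain ⟨e, hcc, hd⟩ := IH (s :: c) (i :: d) hL2 hsc s c i d rfl rfl
      rw [Cmp_far his.symm] at hcc
      rw [Cmp_far his] at hd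
      simp only [List.cons_append, List.nil_append] at hq hsc hcc hd
      refine ⟨s :: j :: e, ?_, ?_⟩
      · rw [Cmp_far hij]
        have t1 : Req (s :: q) (s :: j :: d) := hq.cons s
        have t2 : Req (s :: j :: d) (s :: j :: s :: e) := (hd.cons j).cons s
        have t3 : Req (s :: j :: s :: e) (j :: s :: j :: e) := braid3 hsj e
        simpa using t1.trans (t2.trans t3)
      · rw [Cmp_far hij.symm]
        have b2 : Req (s :: j :: c) (s :: j :: i :: e) := (hcc.cons j).cons s
        have b3 : Req (s :: j :: i :: e) (s :: i :: j :: e) := (swap2 hij.symm e).cons s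
        have b4 : Req (s :: i :: j :: e) (i :: s :: j :: e) := swap2 his.symm (j :: e)
        simpa using hb.trans (b2.trans (b3.trans b4))
  · -- Far s j
    rw [Cmp_far hsj] at hstar
    rw [Cmp_far hsj.symm] at hb
    simp only [List.cons_append, List.nil_append] at hstar hb
    have hL1 : (i :: q).length ≤ ℓ := by simp; omega
    obtain ⟨d, hq, hcc⟩ := IH (i :: q) (j :: c) hL1 hstar i q j c rfl rfl
    refine ⟨s :: d, ?_, ?_⟩
    · have h1 : Req (s :: q) (s :: (Cmp i j ++ d)) := hq.cons s
      exact h1.trans (commList (fun x hx => by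
        rcases mem_Cmp hx with h | h <;> subst h
        exacts [his.symm, hsj]) d)
    · have h1 : Req b (s :: (Cmp j i ++ d)) := (hb.trans (hcc.cons s))
      exact h1.trans (commList (fun x hx => by
        rcases mem_Cmp hx with h | h <;> subst h
        exacts [hsj, his.symm]) d)


lemma key_braid_case (IH : IHout m ℓ) (i y : Fin m) (hiy : Adj i y) (q : List (Fin m))
    (j : Fin m) (b : List (Fin m)) (hlen : q.length + 3 ≤ ℓ + 1)
    (hc : ∃ c, Req (i :: y :: q) (Cmp y j ++ c) ∧ Req b (Cmp j y ++ c)) :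
    ∃ c, Req (y :: i :: q) (Cmp i j ++ c) ∧ Req b (Cmp j i ++ c) := by
  obtain ⟨c, hstar, hb⟩ := hc
  have hL1 : (i :: y :: q).length ≤ ℓ := by simp; omega
  rcases rel_trichot y j with hyj | hyj | hyj
  · -- y = j
    subst hyj
    rw [Cmp_self, List.nil_append] at hstar hb
    refine ⟨q, ?_, ?_⟩
    · rw [Cmp_adj hiy]; exact Req.refl _
    · rw [Cmp_adj hiy.symm]
      simpa using hb.trans hstar.symm
  · -- Adj y j
    rw [Cmp_adj hyj] at hstar
    rw [Cmp_adj hyj.symm] at hb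
    simp only [List.cons_append, List.nil_append] at hstar hb
    rcases rel_trichot i j with hij | hij | hij
    · -- i = j
      subst hij
      obtain ⟨d, h1, h2⟩ := IH (i :: y :: q) (i :: y :: c) hL1 hstar i (y :: q) i (y :: c) rfl rfl
      rw [Cmp_self, List.nil_append] at h1 h2
      have hyqyc : Req (y :: q) (y :: c) := h1.trans h2.symm
      have hL2 : (y :: q).length ≤ ℓ := by simp; omega
      obtain ⟨e, h3, h4⟩ := IH (y :: q) (y :: c) hL2 hyqyc y q y c rfl rfl
      rw [Cmp_self, List.nil_append] at h3 h4
      have hqc : Req q c := h3.trans h4.symm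
      refine ⟨y :: i :: q, ?_, ?_⟩
      · rw [Cmp_self]; exact Req.refl _
      · rw [Cmp_self, List.nil_append]
        exact hb.trans ((hqc.cons i).cons y).symm
    · -- Adj i j : impossible
      exfalso
      rcases hiy with h1 | h1 <;> rcases hyj with h2 | h2 <;> rcases hij with h3 | h3 <;> omega
    · -- Far i j
      obtain ⟨d, hyq, hyc⟩ := IH (i :: y :: q) (j :: y :: c) hL1 hstar i (y :: q) j (y :: c) rfl rfl
      rw [Cmp_far hij] at hyq
      rw [Cmp_far hij.symm] at hyc
      simp only [List.cons_append, List.nil_append] at hyq hyc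
      have e1 := hstar.length
      simp at e1
      have hL2 : (y :: q).length ≤ ℓ := by simp; omega
      obtain ⟨e, hq, hd1⟩ := IH (y :: q) (j :: d) hL2 hyq y q j d rfl rfl
      rw [Cmp_adj hyj] at hq
      rw [Cmp_adj hyj.symm] at hd1
      have hL3 : (y :: c).length ≤ ℓ := by simp; omega
      obtain ⟨g, hcc, hd2⟩ := IH (y :: c) (i :: d) hL3 hyc y c i d rfl rfl
      rw [Cmp_adj hiy.symm] at hcc
      rw [Cmp_adj hiy] at hd2
      simp only [List.cons_append, List.nil_append] at hq hd1 hcc hd2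
      have hdd : Req (y :: j :: e) (y :: i :: g) := hd1.symm.trans hd2
      have e2 := hd1.length
      simp at e2
      have e3 := hq.length
      simp at e3
      have hL4 : (y :: j :: e).length ≤ ℓ := by simp; omega
      obtain ⟨e₂, h5, h6⟩ := IH (y :: j :: e) (y :: i :: g) hL4 hdd y (j :: e) y (i :: g) rfl rfl
      rw [Cmp_self, List.nil_append] at h5 h6
      have hje : Req (j :: e) (i :: g) := h5.trans h6.symm
      have hL5 : (j :: e).length ≤ ℓ := by simp; omega
      obtain ⟨h, he, hg⟩ := IH (j :: e) (i :: g) hL5 hje j e i g rfl rfl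
      rw [Cmp_far hij.symm] at he
      rw [Cmp_far hij] at hg
      simp only [List.cons_append, List.nil_append] at he hg
      refine ⟨y :: i :: j :: y :: h, ?_, ?_⟩
      · rw [Cmp_far hij]
        have t1 : Req (y :: i :: q) (y :: i :: j :: y :: e) := ((hq.cons i).cons y)
        have t2 : Req (y :: i :: j :: y :: e) (y :: i :: j :: y :: i :: h) :=
          (((he.cons y).cons j).cons i).cons y
        have t3 : Req (y :: i :: j :: y :: i :: h) (y :: j :: i :: y :: i :: h) :=
          (swap2 hij (y :: i :: h)).cons y
        have t4 : Req (y :: j :: i :: y :: i :: h) (y :: j :: y :: i :: y :: h) :=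
          ((braid3 hiy h).cons j).cons y
        have t5 : Req (y :: j :: y :: i :: y :: h) (j :: y :: j :: i :: y :: h) :=
          braid3 hyj (i :: y :: h)
        have t6 : Req (j :: y :: j :: i :: y :: h) (j :: y :: i :: j :: y :: h) :=
          ((swap2 hij.symm (y :: h)).cons y).cons j
        simpa using t1.trans (t2.trans (t3.trans (t4.trans (t5.trans t6))))
      · rw [Cmp_far hij.symm]
        have b2 : Req (y :: j :: c) (y :: j :: i :: y :: g) := ((hcc.cons j).cons y)
        have b3 : Req (y :: j :: i :: y :: g) (y :: j :: i :: y :: j :: h) :=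
          (((hg.cons y).cons i).cons j).cons y
        have b4 : Req (y :: j :: i :: y :: j :: h) (y :: i :: j :: y :: j :: h) :=
          (swap2 hij.symm (y :: j :: h)).cons y
        have b5 : Req (y :: i :: j :: y :: j :: h) (y :: i :: y :: j :: y :: h) :=
          ((braid3 hyj.symm h).cons i).cons y
        have b6 : Req (y :: i :: y :: j :: y :: h) (i :: y :: i :: j :: y :: h) :=
          braid3 hiy.symm (j :: y :: h)
        simpa using hb.trans (b2.trans (b3.trans (b4.trans (b5.trans b6))))
  · -- Far y j
    rw [Cmp_far hyj] at hstar
    rw [Cmp_far hyj.symm] at hb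
    simp only [List.cons_append, List.nil_append] at hstar hb
    rcases rel_trichot i j with hij | hij | hij
    · subst hij
      exact absurd hiy hyj.symm.not_adj
    · -- Adj i j
      obtain ⟨d, hyq, hcc⟩ := IH (i :: y :: q) (j :: c) hL1 hstar i (y :: q) j c rfl rfl
      rw [Cmp_adj hij] at hyq
      rw [Cmp_adj hij.symm] at hcc
      simp only [List.cons_append, List.nil_append] at hyq hcc
      have e1 := hstar.length
      simp at e1
      have hL2 : (y :: q).length ≤ ℓ := by simp; omega
      obtain ⟨e, hq, hid⟩ := IH (y :: q) (j :: i :: d) hL2 hyq y q j (i :: d) rfl rfl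
      rw [Cmp_far hyj] at hq
      rw [Cmp_far hyj.symm] at hid
      simp only [List.cons_append, List.nil_append] at hq hid
      have e2 := hyq.length
      simp at e2
      have hL3 : (i :: d).length ≤ ℓ := by simp; omega
      obtain ⟨g, hd, he⟩ := IH (i :: d) (y :: e) hL3 hid i d y e rfl rfl
      rw [Cmp_adj hiy] at hd
      rw [Cmp_adj hiy.symm] at he
      simp only [List.cons_append, List.nil_append] at hd he
      refine ⟨y :: i :: j :: g, ?_, ?_⟩
      · rw [Cmp_adj hij]
        have t1 : Req (y :: i :: q) (y :: i :: j :: e) := (hq.cons i).cons y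
        have t2 : Req (y :: i :: j :: e) (y :: i :: j :: i :: y :: g) :=
          ((he.cons j).cons i).cons y
        have t3 : Req (y :: i :: j :: i :: y :: g) (y :: j :: i :: j :: y :: g) :=
          (braid3 hij (y :: g)).cons y
        have t4 : Req (y :: j :: i :: j :: y :: g) (j :: y :: i :: j :: y :: g) :=
          swap2 hyj (i :: j :: y :: g)
        have t5 : Req (j :: y :: i :: j :: y :: g) (j :: y :: i :: y :: j :: g) :=
          (((swap2 hyj.symm g).cons i).cons y).cons j
        have t6 : Req (j :: y :: i :: y :: j :: g) (j :: i :: y :: i :: j :: g) :=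
          (braid3 hiy.symm (j :: g)).cons j
        simpa using t1.trans (t2.trans (t3.trans (t4.trans (t5.trans t6))))
      · rw [Cmp_adj hij.symm]
        have b2 : Req (y :: c) (y :: i :: j :: d) := (hcc.cons y)
        have b3 : Req (y :: i :: j :: d) (y :: i :: j :: y :: i :: g) :=
          ((hd.cons j).cons i).cons y
        have b4 : Req (y :: i :: j :: y :: i :: g) (y :: i :: y :: j :: i :: g) :=
          ((swap2 hyj.symm (i :: g)).cons i).cons y
        have b5 : Req (y :: i :: y :: j :: i :: g) (i :: y :: i :: j :: i :: g) :=
          braid3 hiy.symm (j :: i :: g)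
        have b6 : Req (i :: y :: i :: j :: i :: g) (i :: y :: j :: i :: j :: g) :=
          ((braid3 hij g).cons y).cons i
        have b7 : Req (i :: y :: j :: i :: j :: g) (i :: j :: y :: i :: j :: g) :=
          (swap2 hyj (i :: j :: g)).cons i
        simpa using hb.trans (b2.trans (b3.trans (b4.trans (b5.trans (b6.trans b7)))))
    · -- Far i j
      obtain ⟨d, hyq, hcc⟩ := IH (i :: y :: q) (j :: c) hL1 hstar i (y :: q) j c rfl rfl
      rw [Cmp_far hij] at hyq
      rw [Cmp_far hij.symm] at hcc
      simp only [List.cons_append, List.nil_append] at hyq hcc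
      have e1 := hstar.length
      simp at e1
      have hL2 : (y :: q).length ≤ ℓ := by simp; omega
      obtain ⟨e, hq, hd⟩ := IH (y :: q) (j :: d) hL2 hyq y q j d rfl rfl
      rw [Cmp_far hyj] at hq
      rw [Cmp_far hyj.symm] at hd
      simp only [List.cons_append, List.nil_append] at hq hd
      refine ⟨y :: i :: e, ?_, ?_⟩
      · rw [Cmp_far hij]
        have t1 : Req (y :: i :: q) (y :: i :: j :: e) := (hq.cons i).cons y
        have t2 : Req (y :: i :: j :: e) (y :: j :: i :: e) := (swap2 hij e).cons y
        have t3 : Req (y :: j :: i :: e) (j :: y :: i :: e) := swap2 hyj (i :: e)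
        simpa using t1.trans (t2.trans t3)
      · rw [Cmp_far hij.symm]
        have b2 : Req (y :: c) (y :: i :: d) := hcc.cons y
        have b3 : Req (y :: i :: d) (y :: i :: y :: e) := (hd.cons i).cons y
        have b4 : Req (y :: i :: y :: e) (i :: y :: i :: e) := braid3 hiy.symm (e)
        simpa using hb.trans (b2.trans (b3.trans b4))


lemma keyAux : ∀ ℓ : ℕ, IHout m ℓ := by
  intro ℓ
  induction ℓ with
  | zero =>
      intro u v hlen _ i a j b hu _
      subst hu; simp at hlen
  | succ ℓ IH =>
      intro u v hlen hr
      induction hr using Relation.ReflTransGen.head_induction_on with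
      | refl =>
          intro i a j b hu hv
          rw [hu] at hv
          obtain ⟨rfl, rfl⟩ : i = j ∧ a = b := by
            have := List.cons.injEq .. ▸ hv; exact ⟨by injection hv, by injection hv⟩
          exact ⟨a, by rw [Cmp_self]; exact ⟨Req.refl _, Req.refl _⟩⟩
      | head hs hr ih =>
          rename_i u' w
          intro i a j b hu hv
          subst hu
          have hlw : w.length ≤ ℓ + 1 := by rw [← hs.length]; exact hlen
          obtain ⟨p, l, r, q, hlr, hul, hwr⟩ := hs
          match p, hul with
          | x :: p', hul =>
              -- step inside the tail
              have hx : x = i := by injection hul with h1 _; exact h1.symm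
              subst hx
              have ha : a = p' ++ (l ++ q) := by injection hul
              have hw : w = x :: (p' ++ (r ++ q)) := hwr
              obtain ⟨c, h1, h2⟩ := ih hlw x (p' ++ (r ++ q)) j b hw hv
              refine ⟨c, ?_, h2⟩
              have hstep : Req a (p' ++ (r ++ q)) := by
                rw [ha]; exact Bstep.req ⟨p', l, r, q, hlr, rfl, rfl⟩
              exact hstep.trans h1
          | [], hul =>
              -- step at the head
              simp only [List.nil_append] at hul hwr
              subst hwr
              have hcomm : (∃ (s₁ s₂ : Fin m) (t : List (Fin m)),
                    Far s₁ s₂ ∧ l = [s₁, s₂] ++ t ∧ r = [s₂, s₁] ++ t) ∨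
                  (∃ (s₁ s₂ : Fin m) (t : List (Fin m)),
                    Adj s₁ s₂ ∧ l = [s₁, s₂, s₁] ++ t ∧ r = [s₂, s₁, s₂] ++ t) := by
                rcases hlr with h | h
                · cases h with
                  | comm x y hxy => exact Or.inl ⟨x, y, [], Or.inl hxy, rfl, rfl⟩
                  | braid x y hxy => exact Or.inr ⟨x, y, [], Or.inl hxy, rfl, rfl⟩
                · cases h with
                  | comm x y hxy => exact Or.inl ⟨y, x, [], Or.inr hxy, rfl, rfl⟩
                  | braid x y hxy => exact Or.inr ⟨y, x, [], Or.inr hxy, rfl, rfl⟩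
              rcases hcomm with ⟨s₁, s₂, t, hfar, hl, hr'⟩ | ⟨s₁, s₂, t, hadj, hl, hr'⟩
              · -- commutation step at the head
                subst hl; subst hr'
                simp only [List.cons_append, List.nil_append] at hul
                have hi : s₁ = i := by injection hul with h1 _; exact h1.symm
                subst hi
                have ha : a = s₂ :: (t ++ q) := by injection hul
                have hlen2 : (t ++ q).length + 2 ≤ ℓ + 1 := by
                  have := congrArg List.length ha
                  simp at this ⊢
                  simp at hlen
                  omega
                rw [ha]
                refine key_comm_case IH s₁ s₂ hfar (t ++ q) j b hlen2 ?_
                exact ih hlw s₂ (s₁ :: (t ++ q)) j b (by simp) hv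
              · -- braid step at the head
                subst hl; subst hr'
                simp only [List.cons_append, List.nil_append] at hul
                have hi : s₁ = i := by injection hul with h1 _; exact h1.symm
                subst hi
                have ha : a = s₂ :: s₁ :: (t ++ q) := by injection hul
                have hlen2 : (t ++ q).length + 3 ≤ ℓ + 1 := by
                  have := congrArg List.length ha
                  simp at this ⊢
                  simp at hlen
                  omega
                rw [ha]
                refine key_braid_case IH s₁ s₂ hadj (t ++ q) j b hlen2 ?_
                exact ih hlw s₂ (s₁ :: s₂ :: (t ++ q)) j b (by simp) hv

end KeyCases

/-- Garside's key lemma: if `i⋅a ≡ j⋅b` then both factor through the right lcm of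
`i` and `j`. -/
theorem key_lemma {i j : Fin m} {a b : List (Fin m)} (h : Req (i :: a) (j :: b)) :
    ∃ c, Req a (Cmp i j ++ c) ∧ Req b (Cmp j i ++ c) :=
  keyAux (i :: a).length (i :: a) (j :: b) le_rfl h i a j b rfl rfl

/-- Left cancellativity (by a generator). -/
theorem Req_cancel {i : Fin m} {a b : List (Fin m)} (h : Req (i :: a) (i :: b)) :
    Req a b := by
  obtain ⟨c, h1, h2⟩ := key_lemma h
  rw [Cmp_self, List.nil_append] at h1 h2
  exact h1.trans h2.symm


/-! ### Bridge to the monoid presentation -/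

section Bridge

variable {n : ℕ}

/-- The rewriting equivalence, as a congruence on the free monoid. -/
def ReqCon (m : ℕ) : Con (FreeMonoid (Fin m)) where
  r u v := Req u.toList v.toList
  iseqv := ⟨fun _ => Req.refl _, fun h => h.symm, fun h h' => h.trans h'⟩
  mul' := fun {w x y z} h1 h2 => by
    simp only [FreeMonoid.toList_mul]
    exact (h1.append_right _).trans (Req.append_left _ h2)

lemma sigma_eq_of (i : ℕ) (h1 : 1 ≤ i) (h2 : i ≤ n - 1) :
    sigma n i = FreeMonoid.of (⟨i - 1, by omega⟩ : Fin (n - 1)) := dif_pos ⟨h1, h2⟩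

lemma sigma_of (a : Fin (n - 1)) : sigma n (a.val + 1) = FreeMonoid.of a := by
  rw [sigma_eq_of (a.val + 1) (by omega) (by omega)]
  congr


lemma braidCon_le_ReqCon : braidCon n ≤ ReqCon (n - 1) := by
  refine Con.conGen_le.2 ?_
  intro x y h
  cases h with
  | comm i j hi hi' hj hj' hij =>
      show Req _ _
      rw [sigma_eq_of i hi hi', sigma_eq_of j hj hj']
      simp only [FreeMonoid.toList_mul, FreeMonoid.toList_of]
      refine swap2 ?_ []
      rcases hij with h | h
      · exact Or.inl (by simp; omega)
      · exact Or.inr (by simp; omega)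
  | braid i hi hi' =>
      show Req _ _
      rw [sigma_eq_of i hi (by omega), sigma_eq_of (i + 1) (by omega) hi']
      simp only [FreeMonoid.toList_mul, FreeMonoid.toList_of]
      have : Adj (⟨i - 1, by omega⟩ : Fin (n - 1)) ⟨i + 1 - 1, by omega⟩ := Or.inl (by simp; omega)
      simpa using braid3 this []

lemma braidCon_of_Brel {l r : List (Fin (n - 1))} (h : Brel l r) :
    braidCon n (FreeMonoid.ofList l) (FreeMonoid.ofList r) := by
  cases h with
  | comm a b hab =>
      have := ConGen.Rel.of _ _ (BraidRel.comm (n := n) (a.val + 1) (b.val + 1)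
        (by omega) (by omega) (by omega) (by omega) (Or.inl (by omega)))
      rw [sigma_of, sigma_of] at this
      exact this
  | braid a b hab =>
      have := ConGen.Rel.of _ _ (BraidRel.braid (n := n) (a.val + 1) (by omega)
        (by omega))
      rw [sigma_of] at this
      have hb : sigma n (a.val + 1 + 1) = FreeMonoid.of b := by
        rw [hab]; exact sigma_of b
      rw [hb] at this
      exact this

lemma braidCon_of_Req {u v : List (Fin (n - 1))} (h : Req u v) :
    braidCon n (FreeMonoid.ofList u) (FreeMonoid.ofList v) := by
  induction h with
  | refl => exact (braidCon n).refl _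
  | tail _ hs ih =>
      refine (braidCon n).trans ih ?_
      obtain ⟨p, l, r, q, hlr, hb, hc⟩ := hs
      rw [hb, hc, FreeMonoid.ofList_append, FreeMonoid.ofList_append,
        FreeMonoid.ofList_append, FreeMonoid.ofList_append]
      refine (braidCon n).mul ((braidCon n).refl _) ?_
      refine (braidCon n).mul ?_ ((braidCon n).refl _)
      rcases hlr with h | h
      · exact braidCon_of_Brel h
      · exact (braidCon n).symm (braidCon_of_Brel h)

lemma pr_eq_iff {u v : Word n} : pr n u = pr n v ↔ Req u.toList v.toList := by
  have h1 : pr n u = pr n v ↔ braidCon n u v := by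
    constructor
    · intro h
      rw [← Con.mk'_ker (braidCon n)]
      exact h
    · intro h
      have : Con.ker (braidCon n).mk' u v := by rw [Con.mk'_ker]; exact h
      exact this
  rw [h1]
  constructor
  · intro h; exact braidCon_le_ReqCon h
  · intro h
    have := braidCon_of_Req (n := n) h
    rwa [FreeMonoid.ofList_toList, FreeMonoid.ofList_toList] at this

end Bridge


section LenFacts

variable {n : ℕ}

lemma lenHom_eq (w : Word n) : lenHom n w = Multiplicative.ofAdd (wlen w) := by
  rw [lenHom, FreeMonoid.lift_apply, wlen]
  induction FreeMonoid.toList w with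
  | nil => rfl
  | cons a l ih =>
      simp only [List.map_cons, List.prod_cons, List.length_cons, ih]
      rw [← ofAdd_add]
      congr 1
      omega

lemma len_pr (w : Word n) : len n (pr n w) = wlen w := by
  rw [len, pr, Con.lift_mk', lenHom_eq]
  rfl

lemma len_mul (x y : PB n) : len n (x * y) = len n x + len n y := by
  rw [len, len, len, map_mul]
  rfl

lemma len_eq_zero {x : PB n} (h : len n x = 0) : x = 1 := by
  obtain ⟨w, rfl⟩ := Con.mk'_surjective (c := braidCon n) x
  rw [show (braidCon n).mk' w = pr n w from rfl, len_pr] at h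
  have : FreeMonoid.toList w = [] := List.length_eq_zero_iff.mp h
  have hw : w = 1 := by
    rw [← FreeMonoid.ofList_toList w, this]; rfl
  rw [hw]
  exact map_one _

lemma len_eq_one {x : PB n} (h : len n x = 1) : ∃ a : Fin (n - 1), x = pr n (FreeMonoid.of a) := by
  obtain ⟨w, rfl⟩ := Con.mk'_surjective (c := braidCon n) x
  rw [show (braidCon n).mk' w = pr n w from rfl, len_pr] at h
  obtain ⟨a, ha⟩ : ∃ a, FreeMonoid.toList w = [a] := by
    rcases hw : FreeMonoid.toList w with _ | ⟨a, l⟩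
    · rw [wlen, hw] at h; simp at h
    · rw [wlen, hw] at h; simp at h
      exact ⟨a, by rw [h]⟩
  exact ⟨a, by rw [← FreeMonoid.ofList_toList w, ha]; rfl⟩

lemma len_sigma (i : ℕ) (h1 : 1 ≤ i) (h2 : i ≤ n - 1) : len n (pr n (sigma n i)) = 1 := by
  rw [len_pr, sigma_eq_of i h1 h2, wlen, FreeMonoid.toList_of]
  rfl

lemma ldvd_len {x y : PB n} (h : ldvd n x y) : len n x ≤ len n y := by
  obtain ⟨c, hc⟩ := h
  rw [← hc, len_mul]
  omega

/-- Every positive braid has a representative in `L_n`. -/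
lemma exists_rep (α : PB n) : ∃ w : Word n, pr n w = α ∧ w ∈ Ln n := by
  obtain ⟨w0, rfl⟩ := Con.mk'_surjective (c := braidCon n) α
  have hw0 : (braidCon n).mk' w0 = pr n w0 := rfl
  rw [hw0]
  set T : Set (List (Fin (n - 1))) := {l | pr n (FreeMonoid.ofList l) = pr n w0} with hT
  have hsub : T ⊆ {l | l.length = wlen w0} := by
    intro l hl
    have := (pr_eq_iff.mp hl).length
    simpa [wlen] using this
  have hfin : T.Finite := Set.Finite.subset (List.finite_length_eq _ _) hsub
  have hne : T.Nonempty := ⟨FreeMonoid.toList w0, by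
    show pr n (FreeMonoid.ofList (FreeMonoid.toList w0)) = pr n w0
    rw [FreeMonoid.ofList_toList]⟩
  obtain ⟨l0, hl0, hmin⟩ := Set.exists_min_image T id hfin hne
  refine ⟨FreeMonoid.ofList l0, hl0, ?_⟩
  intro v hv hlex
  have hvT : FreeMonoid.toList v ∈ T := by
    show pr n (FreeMonoid.ofList (FreeMonoid.toList v)) = pr n w0
    rw [FreeMonoid.ofList_toList]
    exact hv.trans hl0
  have hle := hmin (FreeMonoid.toList v) hvT
  have hlt : FreeMonoid.toList v < l0 := by
    have hx : List.Lex (· < ·) (FreeMonoid.toList v) l0 := by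
      have := hlex
      rwa [lexLt, FreeMonoid.toList_ofList] at this
    exact hx
  exact absurd hle (not_le.mpr hlt)

lemma omegaRep_pr (α : PB n) : pr n (omegaRep n α) = α := by
  rw [omegaRep, dif_pos (exists_rep α)]
  exact (exists_rep α).choose_spec.1

lemma omegaRep_mem (α : PB n) : omegaRep n α ∈ Ln n := by
  rw [omegaRep, dif_pos (exists_rep α)]
  exact (exists_rep α).choose_spec.2

lemma one_mem_Ln : (1 : Word n) ∈ Ln n := by
  intro v _ hlex
  rw [lexLt, FreeMonoid.toList_one] at hlex
  cases hlex

lemma Fset_one : Fset n (1 : Word n) = ∅ := by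
  ext α
  simp only [Fset, Set.mem_setOf_eq, Set.mem_empty_iff_false, iff_false, not_not]
  rw [one_mul]
  exact omegaRep_mem α

end LenFacts


section Characterization

variable {n : ℕ}

lemma list_lt_iff {l l' : List (Fin (n - 1))} : l < l' ↔ List.Lex (· < ·) l l' := Iff.rfl

lemma toList_sigma_mul {j : ℕ} (hj1 : 1 ≤ j) (hj2 : j ≤ n - 1) (w : Word n) :
    FreeMonoid.toList (sigma n j * w) =
      (⟨j - 1, by omega⟩ : Fin (n - 1)) :: FreeMonoid.toList w := by
  rw [FreeMonoid.toList_mul, sigma_eq_of j hj1 hj2, FreeMonoid.toList_of]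
  rfl

lemma wlen_omegaRep (α : PB n) : wlen (omegaRep n α) = len n α := by
  rw [← omegaRep_pr α, len_pr, omegaRep_pr α]

/-- Forward direction: a forbidden prefix is divisible by one of the minimal ones. -/
lemma Fset_sigma_subset {j : ℕ} (hj1 : 1 ≤ j) (hj2 : j ≤ n - 1) {α : PB n}
    (h : α ∈ Fset n (sigma n j)) :
    (∃ i : ℕ, 1 ≤ i ∧ i + 2 ≤ j ∧ ldvd n (pr n (sigma n i)) α) ∨
      (2 ≤ j ∧ ldvd n (pr n (sigma n (j - 1) * sigma n j)) α) := by
  rw [Fset, Set.mem_setOf_eq, Ln, Set.mem_setOf_eq] at h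
  push_neg at h
  obtain ⟨v, hv, hlex⟩ := h
  have hL := toList_sigma_mul hj1 hj2 (omegaRep n α)
  set jf : Fin (n - 1) := ⟨j - 1, by omega⟩ with hjf
  set u := FreeMonoid.toList (omegaRep n α) with hu
  have hreq : Req (FreeMonoid.toList v) (jf :: u) := by
    rw [← hL]; exact pr_eq_iff.mp hv
  rw [lexLt, hL] at hlex
  obtain ⟨lv, hlv⟩ : ∃ lv, FreeMonoid.toList v = lv := ⟨_, rfl⟩
  rw [hlv] at hreq hlex
  cases hlex with
  | nil =>
      exact absurd hreq.length (by simp)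
  | rel hab =>
      rename_i a l1
      obtain ⟨c, _, hu2⟩ := key_lemma hreq
      have haj : a.val < j - 1 := hab
      by_cases hadj : a.val + 1 = j - 1
      · -- adjacent: σ_{j-1} σ_j divides α
        have hA : Adj jf a := Or.inr (by simpa using hadj)
        rw [Cmp_adj hA] at hu2
        refine Or.inr ⟨by omega, pr n (FreeMonoid.ofList c), ?_⟩
        have e1 : sigma n (j - 1) = FreeMonoid.of a := by
          have := sigma_of (n := n) a
          rw [hadj] at this
          exact this
        have e2 : sigma n j = FreeMonoid.of jf := sigma_eq_of j hj1 hj2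
        rw [e1, e2, ← map_mul]
        have hx : pr n (FreeMonoid.of a * FreeMonoid.of jf * FreeMonoid.ofList c)
            = pr n (FreeMonoid.ofList u) := by
          refine pr_eq_iff.mpr ?_
          have hy : Req u ((a :: jf :: []) ++ c) := hu2
          simpa using hy.symm
        rw [hx]
        show pr n (FreeMonoid.ofList (FreeMonoid.toList (omegaRep n α))) = α
        rw [FreeMonoid.ofList_toList, omegaRep_pr]
      · -- far: σ_{a+1} divides α
        have hF : Far jf a := Or.inr (by show a.val + 2 ≤ j - 1; omega)
        rw [Cmp_far hF] at hu2
        refine Or.inl ⟨a.val + 1, by omega, by omega, pr n (FreeMonoid.ofList c), ?_⟩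
        rw [sigma_of, ← map_mul]
        have hx : pr n (FreeMonoid.of a * FreeMonoid.ofList c) = pr n (FreeMonoid.ofList u) := by
          refine pr_eq_iff.mpr ?_
          have hy : Req u ([a] ++ c) := hu2
          simpa using hy.symm
        rw [hx]
        show pr n (FreeMonoid.ofList (FreeMonoid.toList (omegaRep n α))) = α
        rw [FreeMonoid.ofList_toList, omegaRep_pr]
  | cons h' =>
      rename_i l1
      exfalso
      have hcan : Req l1 u := Req_cancel hreq
      refine omegaRep_mem α (FreeMonoid.ofList l1) ?_ ?_
      · rw [← FreeMonoid.ofList_toList (omegaRep n α), ← hu]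
        exact pr_eq_iff.mpr (by simpa using hcan)
      · rw [lexLt, FreeMonoid.toList_ofList, ← hu]
        exact h'

/-- Backward direction: divisibility forces forbiddenness. -/
lemma Fset_sigma_superset {j : ℕ} (hj1 : 1 ≤ j) (hj2 : j ≤ n - 1) {α : PB n}
    (h : (∃ i : ℕ, 1 ≤ i ∧ i + 2 ≤ j ∧ ldvd n (pr n (sigma n i)) α) ∨
      (2 ≤ j ∧ ldvd n (pr n (sigma n (j - 1) * sigma n j)) α)) :
    α ∈ Fset n (sigma n j) := by
  rw [Fset, Set.mem_setOf_eq]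
  intro hLn
  set jf : Fin (n - 1) := ⟨j - 1, by omega⟩ with hjf
  have hL := toList_sigma_mul hj1 hj2 (omegaRep n α)
  rcases h with ⟨i, hi1, hij, β, hβ⟩ | ⟨h2j, γ, hγ⟩
  · -- case σ_i ≼ α, i + 2 ≤ j
    have h1 : pr n (sigma n i * omegaRep n β) = pr n (omegaRep n α) := by
      rw [map_mul, omegaRep_pr, omegaRep_pr, hβ]
    have hnl : ¬ lexLt (sigma n i * omegaRep n β) (omegaRep n α) :=
      omegaRep_mem α _ (by rw [h1, omegaRep_pr])
    rw [lexLt] at hnl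
    have hLi := toList_sigma_mul hi1 (by omega) (omegaRep n β)
    set if' : Fin (n - 1) := ⟨i - 1, by omega⟩ with hif
    obtain ⟨la, hla⟩ : ∃ la, FreeMonoid.toList (omegaRep n α) = la := ⟨_, rfl⟩
    have hlalen : la.length = len n α := by
      rw [← hla, ← wlen_omegaRep α]; rfl
    have hlenα : 1 ≤ len n α := by
      have e2 : len n α = len n (pr n (sigma n i)) + len n β := by
        rw [← hβ, len_mul]
      rw [len_sigma i hi1 (by omega)] at e2
      omega
    rw [hla] at hnl
    obtain ⟨a, l', hal, hav⟩ : ∃ (a : Fin (n - 1)) (l' : List (Fin (n - 1))),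
        la = a :: l' ∧ a.val ≤ i - 1 := by
      rcases lt_trichotomy la (FreeMonoid.toList (sigma n i * omegaRep n β)) with hlt | heq | hgt
      · rw [list_lt_iff, hLi] at hlt
        cases hlt with
        | nil => exfalso; rw [List.length_nil] at hlalen; omega
        | rel hab =>
            rename_i a l1
            refine ⟨a, l1, rfl, ?_⟩
            have hv2 : a.val < if'.val := hab
            simp at hv2
            exact Nat.le_of_lt (show a.val < i - 1 from hab)
        | cons h' =>
            rename_i l1
            exact ⟨if', l1, rfl, le_refl _⟩
      · rw [heq, hLi]
        exact ⟨if', _, rfl, le_refl _⟩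
      · exact absurd (list_lt_iff.mp hgt) hnl
    rw [hla] at hL
    have hF : Far jf a := Or.inr (by show a.val + 2 ≤ j - 1; omega)
    have hpr : pr n (FreeMonoid.ofList (a :: jf :: l')) = pr n (sigma n j * omegaRep n α) := by
      refine pr_eq_iff.mpr ?_
      rw [FreeMonoid.toList_ofList, hL, hal]
      exact (swap2 hF l').symm
    refine hLn _ hpr ?_
    rw [lexLt, hL, hal, FreeMonoid.toList_ofList]
    exact List.Lex.rel (show a < jf from by show a.val < j - 1; omega)
  · -- case σ_{j-1} σ_j ≼ α
    set aj : Fin (n - 1) := ⟨j - 1 - 1, by omega⟩ with hajdef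
    have e2 : sigma n j = FreeMonoid.of jf := sigma_eq_of j hj1 hj2
    have e1 : sigma n (j - 1) = FreeMonoid.of aj := sigma_eq_of (j - 1) (by omega) (by omega)
    have hadj : Adj aj jf := Or.inl (by show j - 1 - 1 + 1 = j - 1; omega)
    have hg' : pr n (sigma n (j - 1)) * (pr n (sigma n j) * γ) = α := by
      rw [← hγ, map_mul, mul_assoc]
    set tg := FreeMonoid.toList (omegaRep n γ) with htg
    have hb : Req (aj :: jf :: aj :: tg) (jf :: aj :: jf :: tg) := braid3 hadj _
    have e3 : FreeMonoid.ofList (aj :: jf :: aj :: tg)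
        = sigma n (j - 1) * (sigma n j * (sigma n (j - 1) * omegaRep n γ)) := by
      rw [e1, e2, htg, FreeMonoid.ofList_cons, FreeMonoid.ofList_cons, FreeMonoid.ofList_cons,
        FreeMonoid.ofList_toList]
    have e4 : FreeMonoid.ofList (jf :: aj :: jf :: tg)
        = sigma n j * (sigma n (j - 1) * (sigma n j * omegaRep n γ)) := by
      rw [e1, e2, htg, FreeMonoid.ofList_cons, FreeMonoid.ofList_cons, FreeMonoid.ofList_cons,
        FreeMonoid.ofList_toList]
    have h2 : pr n (FreeMonoid.ofList (aj :: jf :: aj :: tg))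
        = pr n (FreeMonoid.ofList (jf :: aj :: jf :: tg)) := by
      refine pr_eq_iff.mpr ?_
      rw [FreeMonoid.toList_ofList, FreeMonoid.toList_ofList]
      exact hb
    rw [e3, e4] at h2
    have hpr : pr n (sigma n (j - 1) * (sigma n j * (sigma n (j - 1) * omegaRep n γ)))
        = pr n (sigma n j * omegaRep n α) := by
      rw [h2, map_mul, map_mul, map_mul, map_mul, omegaRep_pr, omegaRep_pr, ← hg',
        ← mul_assoc, ← mul_assoc]
    refine hLn _ hpr ?_
    rw [lexLt, hL, ← e3, FreeMonoid.toList_ofList]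
    exact List.Lex.rel (show aj < jf from by show j - 1 - 1 < j - 1; omega)

end Characterization



section Final

variable {n : ℕ}

lemma ldvd_refl (x : PB n) : ldvd n x x := ⟨1, mul_one _⟩

lemma sigma_mem_Fset {j i : ℕ} (hj2 : j ≤ n - 1) (hi1 : 1 ≤ i) (hij : i + 2 ≤ j) :
    pr n (sigma n i) ∈ Fset n (sigma n j) :=
  Fset_sigma_superset (by omega) hj2 (Or.inl ⟨i, hi1, hij, ldvd_refl _⟩)

lemma pair_mem_Fset {j : ℕ} (h2j : 2 ≤ j) (hj2 : j ≤ n - 1) :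
    pr n (sigma n (j - 1) * sigma n j) ∈ Fset n (sigma n j) :=
  Fset_sigma_superset (by omega) hj2 (Or.inr ⟨h2j, ldvd_refl _⟩)

lemma Fmin_sigma {j : ℕ} (hj1 : 1 ≤ j) (hj2 : j ≤ n - 1) :
    Fmin n (sigma n j) =
      ({x : PB n | ∃ i : ℕ, 1 ≤ i ∧ i ≤ j - 2 ∧ x = pr n (sigma n i)} ∪
       {x : PB n | 2 ≤ j ∧ x = pr n (sigma n (j - 1) * sigma n j)}) := by
  ext α
  rw [Fmin, minimals, Set.mem_setOf_eq, Set.mem_union, Set.mem_setOf_eq, Set.mem_setOf_eq]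
  constructor
  · rintro ⟨hF, hmin⟩
    rcases Fset_sigma_subset hj1 hj2 hF with ⟨i, hi1, hij, hdvd⟩ | ⟨h2j, hdvd⟩
    · left
      have heq := hmin _ (sigma_mem_Fset hj2 hi1 hij) hdvd
      exact ⟨i, hi1, by omega, heq.symm⟩
    · right
      exact ⟨h2j, (hmin _ (pair_mem_Fset h2j hj2) hdvd).symm⟩
  · rintro (⟨i, hi1, hij, rfl⟩ | ⟨h2j, rfl⟩)
    · have hij' : i + 2 ≤ j := by omega
      refine ⟨sigma_mem_Fset hj2 hi1 hij', ?_⟩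
      intro β hβF hβd
      have h1 : 1 ≤ len n β := by
        rcases Fset_sigma_subset hj1 hj2 hβF with ⟨i', hi'1, hi'j, hd⟩ | ⟨_, hd⟩
        · have := ldvd_len hd
          rw [len_sigma i' hi'1 (by omega)] at this
          omega
        · have := ldvd_len hd
          rw [map_mul, len_mul, len_sigma (j - 1) (by omega) (by omega), len_sigma j hj1 hj2] at this
          omega
      obtain ⟨c, hc⟩ := hβd
      have h2 : len n (pr n (sigma n i)) = 1 := len_sigma i hi1 (by omega)
      have h3 : len n c = 0 := by
        have := congrArg (len n) hc
        rw [len_mul, h2] at this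
        omega
      rw [len_eq_zero h3, mul_one] at hc
      exact hc
    · refine ⟨pair_mem_Fset h2j hj2, ?_⟩
      intro β hβF hβd
      have hlen2 : len n (pr n (sigma n (j - 1) * sigma n j)) = 2 := by
        rw [map_mul, len_mul, len_sigma (j - 1) (by omega) (by omega), len_sigma j hj1 hj2]
      have hlβ : len n β ≤ 2 := by
        have := ldvd_len hβd
        omega
      rcases Fset_sigma_subset hj1 hj2 hβF with ⟨i', hi'1, hi'j, d, hd⟩ | ⟨_, d, hd⟩
      · have hβ1 : len n β = 1 ∨ len n β = 2 := by
          have := congrArg (len n) hd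
          rw [len_mul, len_sigma i' hi'1 (by omega)] at this
          omega
        obtain ⟨c, hc⟩ := hβd
        rcases hβ1 with hβ1 | hβ2
        · exfalso
          have hd0 : len n d = 0 := by
            have := congrArg (len n) hd
            rw [len_mul, len_sigma i' hi'1 (by omega)] at this
            omega
          rw [len_eq_zero hd0, mul_one] at hd
          have hlc : len n c = 1 := by
            have := congrArg (len n) hc
            rw [len_mul, hβ1, hlen2] at this
            omega
          obtain ⟨x, rfl⟩ := len_eq_one hlc
          rw [← hd, ← map_mul] at hc
          -- hc : pr (σ_i' · x) = pr (σ_{j-1} σ_j)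
          have hreq : Req (FreeMonoid.toList (sigma n (j - 1) * sigma n j))
              (FreeMonoid.toList (sigma n i' * FreeMonoid.of x)) := pr_eq_iff.mp hc.symm
          rw [sigma_eq_of (j - 1) (by omega) (by omega), sigma_eq_of j hj1 hj2,
            sigma_eq_of i' hi'1 (by omega)] at hreq
          simp only [FreeMonoid.toList_mul, FreeMonoid.toList_of] at hreq
          have hadj : Adj (⟨j - 1 - 1, by omega⟩ : Fin (n - 1)) ⟨j - 1, by omega⟩ :=
            Or.inl (by simp; omega)
          have := Req_pair_adj hadj (by simpa using hreq)
          simp only [List.cons.injEq, Fin.mk.injEq] at this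
          omega
        · have h3 : len n c = 0 := by
            have := congrArg (len n) hc
            rw [len_mul, hβ2, hlen2] at this
            omega
          rw [len_eq_zero h3, mul_one] at hc
          exact hc
      · have hd0 : len n d = 0 := by
          have := congrArg (len n) hd
          rw [len_mul, hlen2] at this
          omega
        rw [len_eq_zero hd0, mul_one] at hd
        exact hd.symm

end Final


/-- `F_n(ε) = ∅` (and `ε ∈ L_n`), and
`F_n^min(σ_j) = {σ_1, …, σ_(j-2)} ∪ {σ_(j-1)σ_j}` (terms with indices `< 1` omitted). -/
theorem statement_2 (n : ℕ) (hn : 2 ≤ n) :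
    (1 : Word n) ∈ Ln n ∧ Fset n 1 = ∅ ∧
    ∀ j : ℕ, 1 ≤ j → j ≤ n - 1 →
      Fmin n (sigma n j) =
        ({x : PB n | ∃ i : ℕ, 1 ≤ i ∧ i ≤ j - 2 ∧ x = pr n (sigma n i)} ∪
         {x : PB n | 2 ≤ j ∧ x = pr n (sigma n (j - 1) * sigma n j)}) := by
  refine ⟨one_mem_Ln, Fset_one, ?_⟩
  intro j hj1 hj2
  exact Fmin_sigma hj1 hj2

end BraidPaper
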